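/- Hook formula for non-ambiguous trees: for every non-ambiguous tree A, one has N(A) · ∏_{v ∈ V_L} n_v · ∏_{v ∈ V_R} n_v = |V_L|! · |V_R|!, where N(A) is the number of non-ambiguous trees isomorphic to A and, for v in V_L (resp. V_R), n_v = #{u ∈ V_L (resp. u ∈ V_R) : v is an ancestor of u}, where the ancestor relation includes u = v. -/
import Mathlib


/-- A non-ambiguous tree: a finite set of points of `ℕ × ℕ`. -/
def IsNAT (A : Finset (ℕ × ℕ)) : Prop :=
  (0, 0) ∈ A ∧
  (∀ p ∈ A, p ≠ (0, 0) →
    Xor' (∃ q ∈ A, q.1 = p.1 ∧ q.2 < p.2) (∃ r ∈ A, r.2 = p.2 ∧ r.1 < p.1)) ∧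
  (∀ p ∈ A, (∀ x' < p.1, ∃ q ∈ A, q.1 = x') ∧ (∀ y' < p.2, ∃ q ∈ A, q.2 = y'))

/-- The set of left children of a non-ambiguous tree. -/
def VL (A : Finset (ℕ × ℕ)) : Set (ℕ × ℕ) :=
  {p | p ∈ A ∧ p ≠ (0, 0) ∧ ∃ r ∈ A, r.2 = p.2 ∧ r.1 < p.1}

/-- The set of right children of a non-ambiguous tree. -/
def VR (A : Finset (ℕ × ℕ)) : Set (ℕ × ℕ) :=
  {p | p ∈ A ∧ p ≠ (0, 0) ∧ ∃ q ∈ A, q.1 = p.1 ∧ q.2 < p.2}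

/-- `q` is the parent of `p`, with `p` a left child, in the non-ambiguous tree `A`. -/
def LeftParent (A : Finset (ℕ × ℕ)) (p q : ℕ × ℕ) : Prop :=
  p ∈ A ∧ q ∈ A ∧ q.2 = p.2 ∧ q.1 < p.1 ∧
    ∀ r ∈ A, r.2 = p.2 → r.1 < p.1 → r.1 ≤ q.1

/-- `q` is the parent of `p`, with `p` a right child, in the non-ambiguous tree `A`. -/
def RightParent (A : Finset (ℕ × ℕ)) (p q : ℕ × ℕ) : Prop :=
  p ∈ A ∧ q ∈ A ∧ q.1 = p.1 ∧ q.2 < p.2 ∧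
    ∀ r ∈ A, r.1 = p.1 → r.2 < p.2 → r.2 ≤ q.2

/-- `u` is an ancestor of `v` in `A` (reflexive-transitive closure of the
parent-to-child relation). -/
def Ancestor (A : Finset (ℕ × ℕ)) (u v : ℕ × ℕ) : Prop :=
  Relation.ReflTransGen (fun x y => LeftParent A y x ∨ RightParent A y x) u v

/-- Two non-ambiguous trees are isomorphic (have the same underlying binary tree). -/
def NATIso (A A' : Finset (ℕ × ℕ)) : Prop :=
  ∃ f : ℕ × ℕ → ℕ × ℕ, Set.BijOn f (↑A) (↑A') ∧ f (0, 0) = (0, 0) ∧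
    ∀ p ∈ A, ∀ q ∈ A,
      (LeftParent A p q ↔ LeftParent A' (f p) (f q)) ∧
      (RightParent A p q ↔ RightParent A' (f p) (f q))

/-- The number of non-ambiguous trees isomorphic to `A`. -/
noncomputable def NATcount (A : Finset (ℕ × ℕ)) : ℕ :=
  Set.ncard {A' : Finset (ℕ × ℕ) | IsNAT A' ∧ NATIso A A'}

/-- The left children of `A`, as a finset. -/
def VLf (A : Finset (ℕ × ℕ)) : Finset (ℕ × ℕ) :=
  A.filter (fun p => p ≠ (0, 0) ∧ ∃ r ∈ A, r.2 = p.2 ∧ r.1 < p.1)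

/-- The right children of `A`, as a finset. -/
def VRf (A : Finset (ℕ × ℕ)) : Finset (ℕ × ℕ) :=
  A.filter (fun p => p ≠ (0, 0) ∧ ∃ q ∈ A, q.1 = p.1 ∧ q.2 < p.2)

/-- The hook length of a vertex `v`: the number of left (resp. right) children of which
`v` is an ancestor (including `v` itself). -/
noncomputable def hookL (A : Finset (ℕ × ℕ)) (v : ℕ × ℕ) : ℕ :=
  Set.ncard {u : ℕ × ℕ | u ∈ VLf A ∧ Ancestor A v u}

noncomputable def hookR (A : Finset (ℕ × ℕ)) (v : ℕ × ℕ) : ℕ :=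
  Set.ncard {u : ℕ × ℕ | u ∈ VRf A ∧ Ancestor A v u}


/-! ### Structural lemmas about NATs -/

section Structural

variable {A A' : Finset (ℕ × ℕ)} {p q u v w : ℕ × ℕ}

lemma LeftParent.memP (h : LeftParent A p q) : p ∈ A := h.1
lemma LeftParent.memQ (h : LeftParent A p q) : q ∈ A := h.2.1
lemma RightParent.memP (h : RightParent A p q) : p ∈ A := h.1
lemma RightParent.memQ (h : RightParent A p q) : q ∈ A := h.2.1

lemma parent_memP (h : LeftParent A p q ∨ RightParent A p q) : p ∈ A :=
  h.elim (·.1) (·.1)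
lemma parent_memQ (h : LeftParent A p q ∨ RightParent A p q) : q ∈ A :=
  h.elim (·.2.1) (·.2.1)

lemma parent_add_lt (h : LeftParent A p q ∨ RightParent A p q) :
    q.1 + q.2 < p.1 + p.2 := by
  rcases h with ⟨_, _, h2, h1, _⟩ | ⟨_, _, h1, h2, _⟩ <;> omega

lemma parent_le (h : LeftParent A p q ∨ RightParent A p q) :
    q.1 ≤ p.1 ∧ q.2 ≤ p.2 := by
  rcases h with ⟨_, _, h2, h1, _⟩ | ⟨_, _, h1, h2, _⟩ <;> omega

lemma Ancestor.le (h : Ancestor A u v) : u.1 ≤ v.1 ∧ u.2 ≤ v.2 := by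
  induction h with
  | refl => omega
  | tail _ hst ih => have := parent_le hst; omega

lemma Ancestor.add_lt (h : Ancestor A u v) (hne : u ≠ v) :
    u.1 + u.2 < v.1 + v.2 := by
  rcases Relation.ReflTransGen.cases_tail h with h | ⟨c, hc, hst⟩
  · exact absurd h.symm hne
  · have := Ancestor.le hc; have := parent_add_lt hst; omega

lemma Ancestor.antisymm (h : Ancestor A u v) (h' : Ancestor A v u) : u = v := by
  by_contra hne
  have := h.add_lt hne
  have := h'.add_lt (Ne.symm hne)
  omega

lemma Ancestor.memP (h : Ancestor A u v) (hv : v ∈ A) : u ∈ A := by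
  induction h with
  | refl => exact hv
  | tail hc hst ih => exact ih (parent_memQ hst)

lemma root_no_parent (h : LeftParent A (0,0) q ∨ RightParent A (0,0) q) : False := by
  rcases h with ⟨_, _, _, h1, _⟩ | ⟨_, _, _, h2, _⟩ <;> omega

lemma ne_root_of_parent (h : LeftParent A p q ∨ RightParent A p q) : p ≠ (0,0) := by
  rintro rfl; exact root_no_parent h

lemma not_left_and_right (hA : IsNAT A) (hl : LeftParent A p q)
    (hr : RightParent A p u) : False := by
  obtain ⟨hp, hq, hq2, hq1, _⟩ := hl
  obtain ⟨_, hu, hu1, hu2, _⟩ := hr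
  have hne : p ≠ (0,0) := by rintro rfl; omega
  rcases hA.2.1 p hp hne with ⟨_, hn⟩ | ⟨_, hn⟩
  · exact hn ⟨q, hq, hq2, hq1⟩
  · exact hn ⟨u, hu, hu1, hu2⟩

lemma leftParent_unique (h : LeftParent A p q) (h' : LeftParent A p q') : q = q' := by
  obtain ⟨hp, hq, hq2, hq1, hmax⟩ := h
  obtain ⟨_, hq', hq2', hq1', hmax'⟩ := h'
  have h1 := hmax q' hq' hq2' hq1'
  have h2 := hmax' q hq hq2 hq1
  have : q.1 = q'.1 := le_antisymm h2 h1
  exact Prod.ext this (by omega)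

lemma rightParent_unique (h : RightParent A p q) (h' : RightParent A p q') : q = q' := by
  obtain ⟨hp, hq, hq1, hq2, hmax⟩ := h
  obtain ⟨_, hq', hq1', hq2', hmax'⟩ := h'
  have h1 := hmax q' hq' hq1' hq2'
  have h2 := hmax' q hq hq1 hq2
  exact Prod.ext (by omega) (le_antisymm h2 h1)

lemma parent_unique (hA : IsNAT A) (h : LeftParent A p q ∨ RightParent A p q)
    (h' : LeftParent A p q' ∨ RightParent A p q') : q = q' := by
  rcases h with h | h <;> rcases h' with h' | h'
  · exact leftParent_unique h h'
  · exact absurd (not_left_and_right hA h h') (by simp)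
  · exact absurd (not_left_and_right hA h' h) (by simp)
  · exact rightParent_unique h h'

/-- Every non-root vertex has a parent. -/
lemma exists_parent (hA : IsNAT A) (hp : p ∈ A) (hne : p ≠ (0,0)) :
    ∃ q, LeftParent A p q ∨ RightParent A p q := by
  rcases hA.2.1 p hp hne with ⟨⟨r, hr, hr1, hr2⟩, _⟩ | ⟨⟨r, hr, hr2, hr1⟩, _⟩
  · -- right child: find point in same column with max second coordinate below p.2
    have hne' : (A.filter (fun s => s.1 = p.1 ∧ s.2 < p.2)).Nonempty :=
      ⟨r, by simp [hr, hr1, hr2]⟩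
    obtain ⟨q, hq, hqmax⟩ := Finset.exists_max_image _ Prod.snd hne'
    simp only [Finset.mem_filter] at hq hqmax
    exact ⟨q, Or.inr ⟨hp, hq.1, hq.2.1, hq.2.2,
      fun s hs hs1 hs2 => hqmax s ⟨hs, hs1, hs2⟩⟩⟩
  · have hne' : (A.filter (fun s => s.2 = p.2 ∧ s.1 < p.1)).Nonempty :=
      ⟨r, by simp [hr, hr1, hr2]⟩
    obtain ⟨q, hq, hqmax⟩ := Finset.exists_max_image _ Prod.fst hne'
    simp only [Finset.mem_filter] at hq hqmax
    exact ⟨q, Or.inl ⟨hp, hq.1, hq.2.1, hq.2.2,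
      fun s hs hs1 hs2 => hqmax s ⟨hs, hs1, hs2⟩⟩⟩

/-- Ancestors of a common vertex are comparable. -/
lemma ancestor_comparable (hA : IsNAT A) :
    ∀ w u v : ℕ × ℕ, Ancestor A u w → Ancestor A v w →
      Ancestor A u v ∨ Ancestor A v u := by
  suffices H : ∀ n, ∀ w u v : ℕ × ℕ, w.1 + w.2 ≤ n → Ancestor A u w → Ancestor A v w →
      Ancestor A u v ∨ Ancestor A v u from
    fun w u v => H (w.1 + w.2) w u v le_rfl
  intro n
  induction n with
  | zero =>
    intro w u v hw hu hv
    rcases Relation.ReflTransGen.cases_tail hu with rfl | ⟨c, hc, hst⟩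
    · exact Or.inr hv
    · exact absurd (parent_add_lt hst) (by omega)
  | succ n ih =>
  intro w u v hw hu hv
  rcases Relation.ReflTransGen.cases_tail hu with rfl | ⟨c, hc, hst⟩
  · exact Or.inr hv
  rcases Relation.ReflTransGen.cases_tail hv with rfl | ⟨c', hc', hst'⟩
  · exact Or.inl hu
  have : c = c' := parent_unique hA hst hst'
  subst this
  exact ih c u v (by have := parent_add_lt hst; omega) hc hc'

/-- Points of a common column are related by ancestry. -/
lemma col_ancestor (hA : IsNAT A) :
    ∀ v : ℕ × ℕ, ∀ u : ℕ × ℕ, u ∈ A → v ∈ A → u.1 = v.1 → u.2 ≤ v.2 →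
      Ancestor A u v := by
  suffices H : ∀ n, ∀ v u : ℕ × ℕ, v.2 ≤ n → u ∈ A → v ∈ A → u.1 = v.1 → u.2 ≤ v.2 →
      Ancestor A u v from fun v u hu hv => H v.2 v u le_rfl hu hv
  intro n
  induction n with
  | zero =>
    intro v u hvn hu hv h1 h2
    have : u = v := Prod.ext h1 (by omega)
    subst this; exact Relation.ReflTransGen.refl
  | succ n ih =>
  intro v u hvn hu hv h1 h2
  rcases eq_or_lt_of_le h2 with h2 | h2
  · have : u = v := Prod.ext h1 h2
    subst this; exact Relation.ReflTransGen.refl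
  -- v has a right parent q in the same column
  have hne' : (A.filter (fun s => s.1 = v.1 ∧ s.2 < v.2)).Nonempty :=
    ⟨u, by simp [hu, h1, h2]⟩
  obtain ⟨q, hq, hqmax⟩ := Finset.exists_max_image _ Prod.snd hne'
  simp only [Finset.mem_filter] at hq hqmax
  have hrp : RightParent A v q :=
    ⟨hv, hq.1, hq.2.1, hq.2.2, fun s hs hs1 hs2 => hqmax s ⟨hs, hs1, hs2⟩⟩
  have huq : u.2 ≤ q.2 := hqmax u ⟨hu, h1, h2⟩
  have : Ancestor A u q := ih q u (by omega) hu hq.1 (by omega) huq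
  exact this.tail (Or.inr hrp)

/-- Points of a common row are related by ancestry. -/
lemma row_ancestor (hA : IsNAT A) :
    ∀ v : ℕ × ℕ, ∀ u : ℕ × ℕ, u ∈ A → v ∈ A → u.2 = v.2 → u.1 ≤ v.1 →
      Ancestor A u v := by
  suffices H : ∀ n, ∀ v u : ℕ × ℕ, v.1 ≤ n → u ∈ A → v ∈ A → u.2 = v.2 → u.1 ≤ v.1 →
      Ancestor A u v from fun v u hu hv => H v.1 v u le_rfl hu hv
  intro n
  induction n with
  | zero =>
    intro v u hvn hu hv h2 h1
    have : u = v := Prod.ext (by omega) h2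
    subst this; exact Relation.ReflTransGen.refl
  | succ n ih =>
  intro v u hvn hu hv h2 h1
  rcases eq_or_lt_of_le h1 with h1 | h1
  · have : u = v := Prod.ext h1 h2
    subst this; exact Relation.ReflTransGen.refl
  have hne' : (A.filter (fun s => s.2 = v.2 ∧ s.1 < v.1)).Nonempty :=
    ⟨u, by simp [hu, h1, h2]⟩
  obtain ⟨q, hq, hqmax⟩ := Finset.exists_max_image _ Prod.fst hne'
  simp only [Finset.mem_filter] at hq hqmax
  have hlp : LeftParent A v q :=
    ⟨hv, hq.1, hq.2.1, hq.2.2, fun s hs hs1 hs2 => hqmax s ⟨hs, hs1, hs2⟩⟩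
  have huq : u.1 ≤ q.1 := hqmax u ⟨hu, h2, h1⟩
  have : Ancestor A u q := ih q u (by omega) hu hq.1 (by omega) huq
  exact this.tail (Or.inl hlp)

end Structural


/-! ### Column tops and row minima -/

section Tops

variable {A A' : Finset (ℕ × ℕ)} {p q u v w : ℕ × ℕ} {x y : ℕ}

/-- The topmost point of column `x` (junk if the column is empty). -/
noncomputable def colTop (A : Finset (ℕ × ℕ)) (x : ℕ) : ℕ × ℕ :=
  (x, sInf {y | (x, y) ∈ A})

/-- The leftmost point of row `y` (junk if the row is empty). -/
noncomputable def rowMin (A : Finset (ℕ × ℕ)) (y : ℕ) : ℕ × ℕ :=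
  (sInf {x | (x, y) ∈ A}, y)

lemma colTop_fst : (colTop A x).1 = x := rfl
lemma rowMin_snd : (rowMin A y).2 = y := rfl

lemma colTop_mem (h : (x, y) ∈ A) : colTop A x ∈ A :=
  Nat.sInf_mem (⟨y, h⟩ : {y | (x, y) ∈ A}.Nonempty)

lemma colTop_le (h : (x, y) ∈ A) : (colTop A x).2 ≤ y := Nat.sInf_le h

lemma rowMin_mem (h : (x, y) ∈ A) : rowMin A y ∈ A :=
  Nat.sInf_mem (⟨x, h⟩ : {x | (x, y) ∈ A}.Nonempty)

lemma rowMin_le (h : (x, y) ∈ A) : (rowMin A y).1 ≤ x := Nat.sInf_le h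

lemma colTop_mem' (h : p ∈ A) : colTop A p.1 ∈ A := colTop_mem (x := p.1) (y := p.2) (by simpa)
lemma rowMin_mem' (h : p ∈ A) : rowMin A p.2 ∈ A := rowMin_mem (x := p.1) (y := p.2) (by simpa)
lemma colTop_le' (h : p ∈ A) : (colTop A p.1).2 ≤ p.2 := colTop_le (y := p.2) (by simpa)
lemma rowMin_le' (h : p ∈ A) : (rowMin A p.2).1 ≤ p.1 := rowMin_le (x := p.1) (by simpa)

lemma colTop_zero (hA : IsNAT A) : colTop A 0 = (0, 0) := by
  have h0 : (colTop A 0).2 ≤ 0 := colTop_le (y := 0) hA.1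
  exact Prod.ext rfl (by omega)

lemma rowMin_zero (hA : IsNAT A) : rowMin A 0 = (0, 0) := by
  have h0 : (rowMin A 0).1 ≤ 0 := rowMin_le (x := 0) hA.1
  exact Prod.ext (by omega) rfl

lemma colTop_ancestor (hA : IsNAT A) (h : p ∈ A) : Ancestor A (colTop A p.1) p :=
  col_ancestor hA p _ (colTop_mem' h) h rfl (colTop_le' h)

lemma rowMin_ancestor (hA : IsNAT A) (h : p ∈ A) : Ancestor A (rowMin A p.2) p :=
  row_ancestor hA p _ (rowMin_mem' h) h rfl (rowMin_le' h)

lemma mem_VLf_iff : v ∈ VLf A ↔ v ∈ A ∧ v ≠ (0,0) ∧ ∃ r ∈ A, r.2 = v.2 ∧ r.1 < v.1 := by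
  simp [VLf, Finset.mem_filter, and_assoc]

lemma mem_VRf_iff : v ∈ VRf A ↔ v ∈ A ∧ v ≠ (0,0) ∧ ∃ r ∈ A, r.1 = v.1 ∧ r.2 < v.2 := by
  simp [VRf, Finset.mem_filter, and_assoc]

lemma VLf_fst_pos (h : v ∈ VLf A) : 1 ≤ v.1 := by
  rw [mem_VLf_iff] at h; obtain ⟨-, -, r, -, -, hr⟩ := h; omega

lemma VRf_snd_pos (h : v ∈ VRf A) : 1 ≤ v.2 := by
  rw [mem_VRf_iff] at h; obtain ⟨-, -, r, -, -, hr⟩ := h; omega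

lemma mem_VLf_iff_leftParent (hA : IsNAT A) : v ∈ VLf A ↔ ∃ q, LeftParent A v q := by
  constructor
  · intro h
    rw [mem_VLf_iff] at h
    obtain ⟨hv, hne, r, hr, hr2, hr1⟩ := h
    obtain ⟨q, hq | hq⟩ := exists_parent hA hv hne
    · exact ⟨q, hq⟩
    · exfalso
      obtain ⟨_, hqA, hq1, hq2, -⟩ := hq
      rcases hA.2.1 v hv hne with ⟨-, hn⟩ | ⟨-, hn⟩
      · exact hn ⟨r, hr, hr2, hr1⟩
      · exact hn ⟨q, hqA, hq1, hq2⟩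
  · rintro ⟨q, hq⟩
    rw [mem_VLf_iff]
    exact ⟨hq.1, by rintro rfl; exact root_no_parent (Or.inl hq),
      q, hq.2.1, hq.2.2.1, hq.2.2.2.1⟩

lemma mem_VRf_iff_rightParent (hA : IsNAT A) : v ∈ VRf A ↔ ∃ q, RightParent A v q := by
  constructor
  · intro h
    rw [mem_VRf_iff] at h
    obtain ⟨hv, hne, r, hr, hr1, hr2⟩ := h
    obtain ⟨q, hq | hq⟩ := exists_parent hA hv hne
    · exfalso
      obtain ⟨_, hqA, hq2, hq1, -⟩ := hq
      rcases hA.2.1 v hv hne with ⟨-, hn⟩ | ⟨-, hn⟩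
      · exact hn ⟨q, hqA, hq2, hq1⟩
      · exact hn ⟨r, hr, hr1, hr2⟩
    · exact ⟨q, hq⟩
  · rintro ⟨q, hq⟩
    rw [mem_VRf_iff]
    exact ⟨hq.1, by rintro rfl; exact root_no_parent (Or.inr hq),
      q, hq.2.1, hq.2.2.1, hq.2.2.2.1⟩

/-- The topmost point of a nonempty column `x ≥ 1` is a left child. -/
lemma colTop_mem_VLf (hA : IsNAT A) (hx : 1 ≤ x) (h : (x, y) ∈ A) :
    colTop A x ∈ VLf A := by
  set t := colTop A x with ht
  have htA : t ∈ A := colTop_mem h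
  have htne : t ≠ (0, 0) := by
    intro hh
    have : t.1 = 0 := by rw [hh]
    rw [ht] at this; simp [colTop] at this; omega
  rw [mem_VLf_iff]
  refine ⟨htA, htne, ?_⟩
  rcases hA.2.1 t htA htne with ⟨⟨r, hrA, hr1, hr2⟩, -⟩ | ⟨hw, -⟩
  · exfalso
    have : t.2 ≤ r.2 := by
      have : (x, r.2) ∈ A := by
        have : r = (x, r.2) := Prod.ext (by exact hr1) rfl
        rwa [this] at hrA
      exact colTop_le this
    omega
  · exact hw

/-- The leftmost point of a nonempty row `y ≥ 1` is a right child. -/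
lemma rowMin_mem_VRf (hA : IsNAT A) (hy : 1 ≤ y) (h : (x, y) ∈ A) :
    rowMin A y ∈ VRf A := by
  set t := rowMin A y with ht
  have htA : t ∈ A := rowMin_mem h
  have htne : t ≠ (0, 0) := by
    intro hh
    have : t.2 = 0 := by rw [hh]
    rw [ht] at this; simp [rowMin] at this; omega
  rw [mem_VRf_iff]
  refine ⟨htA, htne, ?_⟩
  rcases hA.2.1 t htA htne with ⟨hw, -⟩ | ⟨⟨r, hrA, hr2, hr1⟩, -⟩
  · exact hw
  · exfalso
    have : t.1 ≤ r.1 := by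
      have : (r.1, y) ∈ A := by
        have : r = (r.1, y) := Prod.ext rfl (by exact hr2)
        rwa [this] at hrA
      exact rowMin_le this
    omega

/-- A left child is the topmost point of its column. -/
lemma VLf_colTop (hA : IsNAT A) (h : v ∈ VLf A) : colTop A v.1 = v := by
  rw [mem_VLf_iff] at h
  obtain ⟨hv, hne, r, hrA, hr2, hr1⟩ := h
  set t := colTop A v.1 with ht
  have htle : t.2 ≤ v.2 := colTop_le' hv
  rcases eq_or_lt_of_le htle with he | hlt
  · exact Prod.ext rfl he
  · exfalso
    rcases hA.2.1 v hv hne with ⟨-, hn⟩ | ⟨-, hn⟩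
    · exact hn ⟨r, hrA, hr2, hr1⟩
    · exact hn ⟨t, colTop_mem' hv, rfl, hlt⟩

/-- A right child is the leftmost point of its row. -/
lemma VRf_rowMin (hA : IsNAT A) (h : v ∈ VRf A) : rowMin A v.2 = v := by
  rw [mem_VRf_iff] at h
  obtain ⟨hv, hne, r, hrA, hr1, hr2⟩ := h
  set t := rowMin A v.2 with ht
  have htle : t.1 ≤ v.1 := rowMin_le' hv
  rcases eq_or_lt_of_le htle with he | hlt
  · exact Prod.ext he rfl
  · exfalso
    rcases hA.2.1 v hv hne with ⟨-, hn⟩ | ⟨-, hn⟩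
    · exact hn ⟨t, rowMin_mem' hv, rfl, hlt⟩
    · exact hn ⟨r, hrA, hr1, hr2⟩

lemma fst_injOn_VLf (hA : IsNAT A) : Set.InjOn Prod.fst (VLf A : Set (ℕ × ℕ)) := by
  intro a ha b hb hab
  have h1 : colTop A a.1 = a := VLf_colTop hA (by simpa using ha)
  have h2 : colTop A b.1 = b := VLf_colTop hA (by simpa using hb)
  rw [hab] at h1
  exact h1.symm.trans h2

lemma snd_injOn_VRf (hA : IsNAT A) : Set.InjOn Prod.snd (VRf A : Set (ℕ × ℕ)) := by
  intro a ha b hb hab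
  have h1 : rowMin A a.2 = a := VRf_rowMin hA (by simpa using ha)
  have h2 : rowMin A b.2 = b := VRf_rowMin hA (by simpa using hb)
  rw [hab] at h1
  exact h1.symm.trans h2

/-- The set of first coordinates of left children is `[1, |V_L|]`. -/
lemma VLf_image_fst (hA : IsNAT A) :
    (VLf A).image Prod.fst = Finset.Icc 1 ((VLf A).card) := by
  have hAne : A.Nonempty := ⟨(0,0), hA.1⟩
  -- the set of columns of A is downward closed
  have hdc : ∀ p ∈ A, ∀ x' ≤ p.1, ∃ y', (x', y') ∈ A := by
    intro p hp x' hx'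
    rcases eq_or_lt_of_le hx' with rfl | hlt
    · exact ⟨p.2, by simpa using hp⟩
    · obtain ⟨q, hq, hq1⟩ := (hA.2.2 p hp).1 x' hlt
      exact ⟨q.2, by rwa [← hq1, Prod.mk.eta]⟩
  obtain ⟨m, hmA, hmax⟩ := Finset.exists_max_image A Prod.fst hAne
  have himg : (VLf A).image Prod.fst = Finset.Icc 1 m.1 := by
    apply Finset.ext
    intro a
    simp only [Finset.mem_image, Finset.mem_Icc]
    constructor
    · rintro ⟨v, hv, rfl⟩
      exact ⟨VLf_fst_pos hv, hmax v (mem_VLf_iff.mp hv).1⟩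
    · rintro ⟨h1, h2⟩
      obtain ⟨y', hy'⟩ := hdc m hmA a h2
      exact ⟨colTop A a, colTop_mem_VLf hA h1 hy', rfl⟩
  have hcard : (VLf A).card = m.1 := by
    rw [← Finset.card_image_of_injOn (by exact_mod_cast fst_injOn_VLf hA), himg,
      Nat.card_Icc]
    omega
  rw [himg, hcard]

/-- The set of second coordinates of right children is `[1, |V_R|]`. -/
lemma VRf_image_snd (hA : IsNAT A) :
    (VRf A).image Prod.snd = Finset.Icc 1 ((VRf A).card) := by
  have hAne : A.Nonempty := ⟨(0,0), hA.1⟩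
  have hdc : ∀ p ∈ A, ∀ y' ≤ p.2, ∃ x', (x', y') ∈ A := by
    intro p hp y' hy'
    rcases eq_or_lt_of_le hy' with rfl | hlt
    · exact ⟨p.1, by simpa using hp⟩
    · obtain ⟨q, hq, hq2⟩ := (hA.2.2 p hp).2 y' hlt
      exact ⟨q.1, by rwa [← hq2, Prod.mk.eta]⟩
  obtain ⟨m, hmA, hmax⟩ := Finset.exists_max_image A Prod.snd hAne
  have himg : (VRf A).image Prod.snd = Finset.Icc 1 m.2 := by
    apply Finset.ext
    intro a
    simp only [Finset.mem_image, Finset.mem_Icc]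
    constructor
    · rintro ⟨v, hv, rfl⟩
      exact ⟨VRf_snd_pos hv, hmax v (mem_VRf_iff.mp hv).1⟩
    · rintro ⟨h1, h2⟩
      obtain ⟨x', hx'⟩ := hdc m hmA a h2
      exact ⟨rowMin A a, rowMin_mem_VRf hA h1 hx', rfl⟩
  have hcard : (VRf A).card = m.2 := by
    rw [← Finset.card_image_of_injOn (by exact_mod_cast snd_injOn_VRf hA), himg,
      Nat.card_Icc]
    omega
  rw [himg, hcard]

end Tops


/-! ### Isomorphism lemmas -/

section Iso

variable {A A' : Finset (ℕ × ℕ)} {p q u v w c c' : ℕ × ℕ} {f g : ℕ × ℕ → ℕ × ℕ}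

lemma leftChild_unique (h : LeftParent A c q) (h' : LeftParent A c' q) : c = c' := by
  obtain ⟨hc, hq, hq2, hq1, hmax⟩ := h
  obtain ⟨hc', _, hq2', hq1', hmax'⟩ := h'
  have h22 : c.2 = c'.2 := by omega
  rcases lt_trichotomy c.1 c'.1 with hlt | he | hlt
  · have := hmax' c hc (by omega) hlt; omega
  · exact Prod.ext he h22
  · have := hmax c' hc' (by omega) hlt; omega

lemma rightChild_unique (h : RightParent A c q) (h' : RightParent A c' q) : c = c' := by
  obtain ⟨hc, hq, hq1, hq2, hmax⟩ := h
  obtain ⟨hc', _, hq1', hq2', hmax'⟩ := h'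
  have h11 : c.1 = c'.1 := by omega
  rcases lt_trichotomy c.2 c'.2 with hlt | he | hlt
  · have := hmax' c hc (by omega) hlt; omega
  · exact Prod.ext h11 he
  · have := hmax c' hc' (by omega) hlt; omega

variable (hf2 : f (0,0) = (0,0))
  (hf3 : ∀ p ∈ A, ∀ q ∈ A, (LeftParent A p q ↔ LeftParent A' (f p) (f q)) ∧
      (RightParent A p q ↔ RightParent A' (f p) (f q)))

include hf3 in
lemma iso_ancestor (h : Ancestor A u v) (hu : u ∈ A) : Ancestor A' (f u) (f v) := by
  induction h with
  | refl => exact Relation.ReflTransGen.refl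
  | tail hc hst ih =>
    rename_i b cc
    rcases hst with hst | hst
    · exact (ih).tail (Or.inl ((hf3 cc hst.1 b hst.2.1).1.mp hst))
    · exact (ih).tail (Or.inr ((hf3 cc hst.1 b hst.2.1).2.mp hst))

include hf2 hf3 in
lemma iso_unique (hA : IsNAT A)
    (hg2 : g (0,0) = (0,0))
    (hg3 : ∀ p ∈ A, ∀ q ∈ A, (LeftParent A p q ↔ LeftParent A' (g p) (g q)) ∧
      (RightParent A p q ↔ RightParent A' (g p) (g q))) :
    ∀ p ∈ A, f p = g p := by
  suffices H : ∀ n, ∀ p, p.1 + p.2 ≤ n → p ∈ A → f p = g p from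
    fun p hp => H (p.1 + p.2) p le_rfl hp
  intro n
  induction n with
  | zero =>
    intro p hpn hp
    have : p = (0,0) := Prod.ext (by omega) (by omega)
    subst this; rw [hf2, hg2]
  | succ n ih =>
    intro p hpn hp
    by_cases hroot : p = (0,0)
    · subst hroot; rw [hf2, hg2]
    obtain ⟨q, hq⟩ := exists_parent hA hp hroot
    have hqA : q ∈ A := parent_memQ hq
    have hqn : q.1 + q.2 ≤ n := by have := parent_add_lt hq; omega
    have hfg : f q = g q := ih q hqn hqA
    rcases hq with hq | hq
    · have h1 : LeftParent A' (f p) (f q) := (hf3 p hp q hqA).1.mp hq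
      have h2 : LeftParent A' (g p) (g q) := (hg3 p hp q hqA).1.mp hq
      rw [← hfg] at h2
      exact leftChild_unique h1 h2
    · have h1 : RightParent A' (f p) (f q) := (hf3 p hp q hqA).2.mp hq
      have h2 : RightParent A' (g p) (g q) := (hg3 p hp q hqA).2.mp hq
      rw [← hfg] at h2
      exact rightChild_unique h1 h2

include hf3 in
lemma iso_mem_VLf (hA : IsNAT A) (hA' : IsNAT A') (hv : v ∈ VLf A) :
    f v ∈ VLf A' := by
  obtain ⟨q, hq⟩ := (mem_VLf_iff_leftParent hA).mp hv
  exact (mem_VLf_iff_leftParent hA').mpr ⟨f q, (hf3 v hq.1 q hq.2.1).1.mp hq⟩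

include hf3 in
lemma iso_mem_VRf (hA : IsNAT A) (hA' : IsNAT A') (hv : v ∈ VRf A) :
    f v ∈ VRf A' := by
  obtain ⟨q, hq⟩ := (mem_VRf_iff_rightParent hA).mp hv
  exact (mem_VRf_iff_rightParent hA').mpr ⟨f q, (hf3 v hq.1 q hq.2.1).2.mp hq⟩

include hf3 in
lemma iso_fst_eq (hA : IsNAT A) :
    ∀ v u : ℕ × ℕ, u ∈ A → v ∈ A → u.1 = v.1 → u.2 ≤ v.2 → (f u).1 = (f v).1 := by
  suffices H : ∀ n, ∀ v u : ℕ × ℕ, v.2 ≤ n → u ∈ A → v ∈ A → u.1 = v.1 → u.2 ≤ v.2 →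
      (f u).1 = (f v).1 from fun v u hu hv => H v.2 v u le_rfl hu hv
  intro n
  induction n with
  | zero =>
    intro v u hvn hu hv h1 h2
    have : u = v := Prod.ext h1 (by omega)
    subst this; rfl
  | succ n ih =>
    intro v u hvn hu hv h1 h2
    rcases eq_or_lt_of_le h2 with h2 | h2
    · have : u = v := Prod.ext h1 h2
      subst this; rfl
    have hne' : (A.filter (fun s => s.1 = v.1 ∧ s.2 < v.2)).Nonempty :=
      ⟨u, by simp [hu, h1, h2]⟩
    obtain ⟨qq, hq, hqmax⟩ := Finset.exists_max_image _ Prod.snd hne'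
    simp only [Finset.mem_filter] at hq hqmax
    have hrp : RightParent A v qq :=
      ⟨hv, hq.1, hq.2.1, hq.2.2, fun s hs hs1 hs2 => hqmax s ⟨hs, hs1, hs2⟩⟩
    have hrp' : RightParent A' (f v) (f qq) := (hf3 v hv qq hq.1).2.mp hrp
    have huq : u.2 ≤ qq.2 := hqmax u ⟨hu, h1, h2⟩
    have h3 : (f u).1 = (f qq).1 := ih qq u (by omega) hu hq.1 (by omega) huq
    rw [h3, hrp'.2.2.1]

include hf3 in
lemma iso_snd_eq (hA : IsNAT A) :
    ∀ v u : ℕ × ℕ, u ∈ A → v ∈ A → u.2 = v.2 → u.1 ≤ v.1 → (f u).2 = (f v).2 := by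
  suffices H : ∀ n, ∀ v u : ℕ × ℕ, v.1 ≤ n → u ∈ A → v ∈ A → u.2 = v.2 → u.1 ≤ v.1 →
      (f u).2 = (f v).2 from fun v u hu hv => H v.1 v u le_rfl hu hv
  intro n
  induction n with
  | zero =>
    intro v u hvn hu hv h2 h1
    have : u = v := Prod.ext (by omega) h2
    subst this; rfl
  | succ n ih =>
    intro v u hvn hu hv h2 h1
    rcases eq_or_lt_of_le h1 with h1 | h1
    · have : u = v := Prod.ext h1 h2
      subst this; rfl
    have hne' : (A.filter (fun s => s.2 = v.2 ∧ s.1 < v.1)).Nonempty :=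
      ⟨u, by simp [hu, h1, h2]⟩
    obtain ⟨qq, hq, hqmax⟩ := Finset.exists_max_image _ Prod.fst hne'
    simp only [Finset.mem_filter] at hq hqmax
    have hlp : LeftParent A v qq :=
      ⟨hv, hq.1, hq.2.1, hq.2.2, fun s hs hs1 hs2 => hqmax s ⟨hs, hs1, hs2⟩⟩
    have hlp' : LeftParent A' (f v) (f qq) := (hf3 v hv qq hq.1).1.mp hlp
    have huq : u.1 ≤ qq.1 := hqmax u ⟨hu, h2, h1⟩
    have h3 : (f u).2 = (f qq).2 := ih qq u (by omega) hu hq.1 (by omega) huq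
    rw [h3, hlp'.2.2.1]

end Iso


/-! ### The abstract hook length formula for forests -/

section Hook

attribute [local instance] Classical.propDecidable

variable {α : Type*}

/-- The set of order-compatible bijective labelings of `F` by `{1, …, n}`. -/
def Labelings (F : Finset α) (anc : α → α → Prop) (n : ℕ) : Set (α → ℕ) :=
  {g | Set.BijOn g ↑F ↑(Finset.Icc 1 n) ∧
       (∀ u ∈ F, ∀ v ∈ F, anc u v → g u ≤ g v) ∧ ∀ v, v ∉ F → g v = 0}

lemma labelings_finite (F : Finset α) (anc : α → α → Prop) (n : ℕ) :
    (Labelings F anc n).Finite := by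
  haveI : Finite ({x // x ∈ F} → {y // y ∈ Finset.Icc 1 n}) := by infer_instance
  apply Set.Finite.subset (Set.finite_range
    (fun (h : {x // x ∈ F} → {y // y ∈ Finset.Icc 1 n}) (v : α) =>
      if hv : v ∈ F then (h ⟨v, hv⟩ : ℕ) else 0))
  intro g hg
  obtain ⟨hbij, -, h0⟩ := hg
  refine ⟨fun v => ⟨g v, by exact_mod_cast hbij.mapsTo v.2⟩, ?_⟩
  funext v
  dsimp only
  split
  · rfl
  · exact (h0 v (by assumption)).symm

theorem hook_abstract : ∀ (n : ℕ) (F : Finset α) (anc : α → α → Prop) (m : α → ℕ),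
    (∀ u ∈ F, anc u u) →
    (∀ u v w : α, anc u v → anc v w → anc u w) →
    (∀ u v : α, anc u v → u ≠ v → m u < m v) →
    (∀ w ∈ F, ∀ u ∈ F, ∀ v ∈ F, anc u w → anc v w → anc u v ∨ anc v u) →
    F.card = n →
    (Labelings F anc n).ncard * ∏ v ∈ F, (F.filter (fun u => anc v u)).card
      = n.factorial := by
  intro n
  induction n with
  | zero =>
    intro F anc m _ _ _ _ hF
    have hFe : F = ∅ := Finset.card_eq_zero.mp hF
    subst hFe
    have h1 : Labelings (∅ : Finset α) anc 0 = {fun _ => 0} := by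
      ext g
      constructor
      · rintro ⟨-, -, h0⟩
        exact funext fun v => h0 v (Finset.notMem_empty v)
      · rintro rfl
        refine ⟨⟨fun x hx => by simp at hx, fun x hx => by simp at hx,
          fun x hx => by simp at hx⟩, fun u hu => by simp at hu, fun v _ => rfl⟩
    rw [h1, Set.ncard_singleton, Finset.prod_empty]
    rfl
  | succ n ih =>
    intro F anc m hrefl htrans hm hchain hF
    -- the roots of the forest
    set Roots := F.filter (fun r => ∀ u ∈ F, anc u r → u = r) with hRoots
    -- every element of F has a unique root ancestor
    have hexroot : ∀ w ∈ F, ∃ r ∈ Roots, anc r w := by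
      intro w hw
      have hne : (F.filter (fun u => anc u w)).Nonempty := ⟨w, by simp [hw, hrefl w hw]⟩
      obtain ⟨r, hr, hrmin⟩ := Finset.exists_min_image _ m hne
      simp only [Finset.mem_filter] at hr hrmin
      refine ⟨r, ?_, hr.2⟩
      rw [hRoots, Finset.mem_filter]
      refine ⟨hr.1, fun u hu hur => ?_⟩
      by_contra hne'
      have h1 : m u < m r := hm u r hur hne'
      have h2 : m r ≤ m u := hrmin u ⟨hu, htrans u r w hur hr.2⟩
      omega
    have hrootmem : ∀ r ∈ Roots, r ∈ F := fun r hr => (Finset.mem_filter.mp hr).1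
    have hrootprop : ∀ r ∈ Roots, ∀ u ∈ F, anc u r → u = r :=
      fun r hr => (Finset.mem_filter.mp hr).2
    -- (b) the hooks of the roots sum to n+1
    have hpart : F = Roots.biUnion (fun r => F.filter (fun u => anc r u)) := by
      apply Finset.ext
      intro w
      simp only [Finset.mem_biUnion, Finset.mem_filter]
      constructor
      · intro hw
        obtain ⟨r, hr, hrw⟩ := hexroot w hw
        exact ⟨r, hr, hw, hrw⟩
      · rintro ⟨r, -, hw, -⟩
        exact hw
    have hdisj : ∀ r ∈ Roots, ∀ r' ∈ Roots, r ≠ r' →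
        Disjoint (F.filter (fun u => anc r u)) (F.filter (fun u => anc r' u)) := by
      intro r hr r' hr' hne'
      rw [Finset.disjoint_left]
      intro u hu hu'
      simp only [Finset.mem_filter] at hu hu'
      rcases hchain u hu.1 r (hrootmem r hr) r' (hrootmem r' hr') hu.2 hu'.2 with h | h
      · exact hne' (hrootprop r' hr' r (hrootmem r hr) h)
      · exact hne' ((hrootprop r hr r' (hrootmem r' hr') h).symm)
    have hsum : ∑ r ∈ Roots, (F.filter (fun u => anc r u)).card = n + 1 := by
      rw [← hF]
      conv_rhs => rw [hpart]
      exact (Finset.card_biUnion hdisj).symm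
    -- (c) partition of labelings by the element with label 1
    set T := (labelings_finite F anc (n + 1)).toFinset with hT
    have hTmem : ∀ g, g ∈ T ↔ g ∈ Labelings F anc (n + 1) := by
      intro g; rw [hT, Set.Finite.mem_toFinset]
    have hTpart : T = Roots.biUnion (fun r => T.filter (fun g => g r = 1)) := by
      apply Finset.ext
      intro g
      simp only [Finset.mem_biUnion, Finset.mem_filter]
      constructor
      · intro hg
        obtain ⟨hbij, hmono, h0⟩ := (hTmem g).mp hg
        have h1 : (1 : ℕ) ∈ (Finset.Icc 1 (n + 1) : Finset ℕ) := by
          simp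
        obtain ⟨r, hrF, hgr⟩ := hbij.surjOn h1
        refine ⟨r, ?_, hg, hgr⟩
        rw [hRoots, Finset.mem_filter]
        refine ⟨hrF, fun u hu hur => ?_⟩
        have h2 : g u ≤ g r := hmono u hu r hrF hur
        have h3 : (1 : ℕ) ≤ g u := by
          have := hbij.mapsTo hu
          simp only [Finset.coe_Icc, Set.mem_Icc] at this
          exact this.1
        exact hbij.injOn hu hrF (by omega)
      · rintro ⟨r, -, hg, -⟩
        exact hg
    have hTdisj : ∀ r ∈ Roots, ∀ r' ∈ Roots, r ≠ r' →
        Disjoint (T.filter (fun g => g r = 1)) (T.filter (fun g => g r' = 1)) := by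
      intro r hr r' hr' hne'
      rw [Finset.disjoint_left]
      intro g hg hg'
      simp only [Finset.mem_filter] at hg hg'
      obtain ⟨hbij, -, -⟩ := (hTmem g).mp hg.1
      exact hne' (hbij.injOn (hrootmem r hr) (hrootmem r' hr')
        (hg.2.trans hg'.2.symm))
    -- (d) labelings with label 1 at root r correspond to labelings of F.erase r
    have hbijr : ∀ r ∈ Roots,
        (T.filter (fun g => g r = 1)).card
          = (Labelings (F.erase r) anc n).ncard := by
      intro r hr
      have hrF := hrootmem r hr
      have himg : (fun (g : α → ℕ) => fun v => if v = r then 0 else g v - 1) ''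
          ↑(T.filter (fun g => g r = 1)) = Labelings (F.erase r) anc n := by
        apply Set.eq_of_subset_of_subset
        · rintro g' ⟨g, hg, rfl⟩
          simp only [Finset.coe_filter, Set.mem_setOf_eq] at hg
          obtain ⟨hbij, hmono, h0⟩ := (hTmem g).mp hg.1
          have hgr := hg.2
          have hval : ∀ v ∈ F, v ≠ r → 2 ≤ g v ∧ g v ≤ n + 1 := by
            intro v hv hvr
            have h1 := hbij.mapsTo hv
            simp only [Finset.coe_Icc, Set.mem_Icc] at h1
            constructor
            · rcases Nat.lt_or_ge (g v) 2 with h | h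
              · exfalso
                exact hvr (hbij.injOn hv hrF (by omega))
              · exact h
            · exact h1.2
          refine ⟨⟨?_, ?_, ?_⟩, ?_, ?_⟩
          · intro v hv
            simp only [Finset.coe_erase, Set.mem_diff, Finset.mem_coe,
              Set.mem_singleton_iff] at hv
            obtain ⟨h1, h2⟩ := hval v hv.1 hv.2
            simp only [if_neg hv.2, Finset.coe_Icc, Set.mem_Icc]
            omega
          · intro u hu v hv huv
            simp only [Finset.coe_erase, Set.mem_diff, Finset.mem_coe,
              Set.mem_singleton_iff] at hu hv
            simp only [if_neg hu.2, if_neg hv.2] at huv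
            obtain ⟨hu1, -⟩ := hval u hu.1 hu.2
            obtain ⟨hv1, -⟩ := hval v hv.1 hv.2
            exact hbij.injOn hu.1 hv.1 (by omega)
          · intro b hb
            simp only [Finset.coe_Icc, Set.mem_Icc] at hb
            have h1 : (b + 1 : ℕ) ∈ (Finset.Icc 1 (n + 1) : Finset ℕ) := by
              simp; omega
            obtain ⟨v, hvF, hgv⟩ := hbij.surjOn h1
            have hvr : v ≠ r := by
              intro h; subst h; omega
            refine ⟨v, ?_, ?_⟩
            · simp only [Finset.coe_erase, Set.mem_diff, Finset.mem_coe,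
                Set.mem_singleton_iff]
              exact ⟨hvF, hvr⟩
            · simp only [if_neg hvr]
              omega
          · intro u hu v hv huv
            rw [Finset.mem_erase] at hu hv
            simp only [if_neg hu.1, if_neg hv.1]
            exact Nat.sub_le_sub_right (hmono u hu.2 v hv.2 huv) 1
          · intro v hv
            rw [Finset.mem_erase] at hv
            push_neg at hv
            by_cases hvr : v = r
            · simp [hvr]
            · simp only [if_neg hvr]
              rw [h0 v (hv hvr)]
        · intro h hh
          obtain ⟨hbij, hmono, h0⟩ := hh
          set g : α → ℕ := fun v => if v = r then 1 else if v ∈ F then h v + 1 else 0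
            with hgdef
          have hval : ∀ v ∈ F, v ≠ r → 1 ≤ h v ∧ h v ≤ n := by
            intro v hv hvr
            have h1 := hbij.mapsTo (by simp [Finset.mem_erase, hvr, hv] : v ∈ ↑(F.erase r))
            simp only [Finset.coe_Icc, Set.mem_Icc] at h1
            exact h1
          have hgmem : g ∈ Labelings F anc (n + 1) := by
            refine ⟨⟨?_, ?_, ?_⟩, ?_, ?_⟩
            · intro v hv
              simp only [Finset.mem_coe] at hv
              by_cases hvr : v = r
              · simp [hgdef, hvr]
              · obtain ⟨h1, h2⟩ := hval v hv hvr
                simp only [hgdef, if_neg hvr, if_pos hv, Finset.coe_Icc, Set.mem_Icc]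
                omega
            · intro u hu v hv huv
              simp only [Finset.mem_coe] at hu hv
              by_cases hur : u = r <;> by_cases hvr : v = r
              · rw [hur, hvr]
              · exfalso
                simp only [hgdef, if_pos hur, if_neg hvr, if_pos hv] at huv
                obtain ⟨h1, -⟩ := hval v hv hvr
                omega
              · exfalso
                simp only [hgdef, if_pos hvr, if_neg hur, if_pos hu] at huv
                obtain ⟨h1, -⟩ := hval u hu hur
                omega
              · simp only [hgdef, if_neg hur, if_neg hvr, if_pos hu, if_pos hv] at huv
                exact hbij.injOn (by simp [Finset.mem_erase, hur, hu])
                  (by simp [Finset.mem_erase, hvr, hv]) (by omega)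
            · intro b hb
              simp only [Finset.coe_Icc, Set.mem_Icc] at hb
              by_cases hb1 : b = 1
              · exact ⟨r, by simpa using hrF, by simp [hgdef, hb1]⟩
              · have h1 : (b - 1 : ℕ) ∈ (Finset.Icc 1 n : Finset ℕ) := by
                  simp; omega
                obtain ⟨v, hvF, hgv⟩ := hbij.surjOn h1
                simp only [Finset.coe_erase, Set.mem_diff, Finset.mem_coe,
                  Set.mem_singleton_iff] at hvF
                refine ⟨v, by simpa using hvF.1, ?_⟩
                simp only [hgdef, if_neg hvF.2, if_pos hvF.1]
                omega
            · intro u hu v hv huv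
              by_cases hur : u = r
              · have hgu : g u = 1 := by simp [hgdef, hur]
                rw [hgu]
                by_cases hvr : v = r
                · simp [hgdef, hvr]
                · obtain ⟨h1, -⟩ := hval v hv hvr
                  simp only [hgdef, if_neg hvr, if_pos hv]
                  omega
              · by_cases hvr : v = r
                · exact absurd (hrootprop r hr u hu (hvr ▸ huv)) hur
                · simp only [hgdef, if_neg hur, if_neg hvr, if_pos hu, if_pos hv]
                  have := hmono u (by simp [Finset.mem_erase, hur, hu])
                    v (by simp [Finset.mem_erase, hvr, hv]) huv
                  omega
            · intro v hv
              have hvr : v ≠ r := fun h => hv (h ▸ hrF)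
              simp [hgdef, if_neg hvr, if_neg hv]
          refine ⟨g, ?_, ?_⟩
          · simp only [Finset.coe_filter, Set.mem_setOf_eq]
            exact ⟨(hTmem g).mpr hgmem, by simp [hgdef]⟩
          · funext v
            by_cases hvr : v = r
            · subst hvr
              simp only [if_pos rfl]
              exact (h0 v (by simp)).symm
            · simp only [if_neg hvr, hgdef]
              by_cases hvF : v ∈ F
              · simp only [if_neg hvr, if_pos hvF]
                omega
              · simp only [if_neg hvr, if_neg hvF]
                rw [h0 v (by simp [hvF])]
      have hinj : Set.InjOn (fun (g : α → ℕ) => fun v => if v = r then 0 else g v - 1)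
          ↑(T.filter (fun g => g r = 1)) := by
        intro g1 hg1 g2 hg2 he
        simp only [Finset.coe_filter, Set.mem_setOf_eq] at hg1 hg2
        obtain ⟨hbij1, -, h01⟩ := (hTmem g1).mp hg1.1
        obtain ⟨hbij2, -, h02⟩ := (hTmem g2).mp hg2.1
        funext v
        by_cases hvr : v = r
        · subst hvr; rw [hg1.2, hg2.2]
        by_cases hvF : v ∈ F
        · have he' := congrFun he v
          simp only [if_neg hvr] at he'
          have h1 := hbij1.mapsTo hvF
          have h2 := hbij2.mapsTo hvF
          simp only [Finset.coe_Icc, Set.mem_Icc] at h1 h2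
          have hv1 : 2 ≤ g1 v := by
            rcases Nat.lt_or_ge (g1 v) 2 with h | h
            · exact absurd (hbij1.injOn hvF hrF (by omega)) hvr
            · exact h
          have hv2 : 2 ≤ g2 v := by
            rcases Nat.lt_or_ge (g2 v) 2 with h | h
            · exact absurd (hbij2.injOn hvF hrF (by omega)) hvr
            · exact h
          omega
        · rw [h01 v hvF, h02 v hvF]
      rw [← Set.ncard_coe_finset, ← himg, Set.ncard_image_of_injOn hinj]
    -- hooks restricted to F.erase r agree with hooks in F
    have hhook : ∀ r ∈ Roots, ∀ v ∈ F.erase r,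
        ((F.erase r).filter (fun u => anc v u)).card
          = (F.filter (fun u => anc v u)).card := by
      intro r hr v hv
      congr 1
      apply Finset.ext
      intro u
      simp only [Finset.mem_filter, Finset.mem_erase]
      rw [Finset.mem_erase] at hv
      constructor
      · rintro ⟨⟨-, h1⟩, h2⟩
        exact ⟨h1, h2⟩
      · rintro ⟨h1, h2⟩
        refine ⟨⟨?_, h1⟩, h2⟩
        rintro rfl
        exact hv.1 (hrootprop u hr v hv.2 h2)
    -- the inductive computation
    have hIH : ∀ r ∈ Roots,
        (Labelings (F.erase r) anc n).ncard
            * ∏ v ∈ F.erase r, ((F.erase r).filter (fun u => anc v u)).card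
          = n.factorial := by
      intro r hr
      exact ih (F.erase r) anc m
        (fun u hu => hrefl u (Finset.mem_erase.mp hu).2)
        htrans hm
        (fun w hw u hu v hv => hchain w (Finset.mem_erase.mp hw).2
          u (Finset.mem_erase.mp hu).2 v (Finset.mem_erase.mp hv).2)
        (by rw [Finset.card_erase_of_mem (hrootmem r hr), hF]; omega)
    have hcount : (Labelings F anc (n + 1)).ncard
        = ∑ r ∈ Roots, (Labelings (F.erase r) anc n).ncard := by
      rw [Set.ncard_eq_toFinset_card _ (labelings_finite F anc (n + 1)), ← hT]
      conv_lhs => rw [hTpart]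
      rw [Finset.card_biUnion hTdisj]
      exact Finset.sum_congr rfl hbijr
    calc (Labelings F anc (n + 1)).ncard * ∏ v ∈ F, (F.filter (fun u => anc v u)).card
        = ∑ r ∈ Roots, (Labelings (F.erase r) anc n).ncard
            * ∏ v ∈ F, (F.filter (fun u => anc v u)).card := by
          rw [hcount, Finset.sum_mul]
      _ = ∑ r ∈ Roots, n.factorial * (F.filter (fun u => anc r u)).card := by
          apply Finset.sum_congr rfl
          intro r hr
          have h1 : ∏ v ∈ F, (F.filter (fun u => anc v u)).card
              = (F.filter (fun u => anc r u)).card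
                * ∏ v ∈ F.erase r, (F.filter (fun u => anc v u)).card :=
            (Finset.mul_prod_erase F (fun v => (F.filter (fun u => anc v u)).card)
              (hrootmem r hr)).symm
          have h2 : ∏ v ∈ F.erase r, ((F.erase r).filter (fun u => anc v u)).card
              = ∏ v ∈ F.erase r, (F.filter (fun u => anc v u)).card :=
            Finset.prod_congr rfl (hhook r hr)
          rw [h1, ← h2, ← hIH r hr]
          ring
      _ = n.factorial * (n + 1) := by
          rw [← Finset.mul_sum, hsum]
      _ = (n + 1).factorial := by
          rw [Nat.factorial_succ]; ring

end Hook


/-! ### The map from labelings to NATs -/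

/-- The relabeling map induced by a pair of labelings. -/
noncomputable def natMap (A : Finset (ℕ × ℕ)) (gl gr : ℕ × ℕ → ℕ) (p : ℕ × ℕ) : ℕ × ℕ :=
  (gl (colTop A p.1), gr (rowMin A p.2))

section NatMap

variable {A : Finset (ℕ × ℕ)} {p q u v w : ℕ × ℕ} {gl gr : ℕ × ℕ → ℕ}

lemma root_notMem_VLf : (0,0) ∉ VLf A := by
  rw [mem_VLf_iff]; rintro ⟨-, h, -⟩; exact h rfl

lemma root_notMem_VRf : (0,0) ∉ VRf A := by
  rw [mem_VRf_iff]; rintro ⟨-, h, -⟩; exact h rfl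

variable (hA : IsNAT A)
variable (hgl : gl ∈ Labelings (VLf A) (Ancestor A) (VLf A).card)
variable (hgr : gr ∈ Labelings (VRf A) (Ancestor A) (VRf A).card)

include hA hgl

lemma X_zero (hp : p ∈ A) (h0 : p.1 = 0) : gl (colTop A p.1) = 0 := by
  rw [h0, colTop_zero hA]
  exact hgl.2.2 _ root_notMem_VLf

lemma X_colTop_mem (hp : p ∈ A) (h1 : 1 ≤ p.1) : colTop A p.1 ∈ VLf A :=
  colTop_mem_VLf hA h1 (x := p.1) (y := p.2) (by simpa using hp)

lemma X_pos (hp : p ∈ A) (h1 : 1 ≤ p.1) :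
    1 ≤ gl (colTop A p.1) ∧ gl (colTop A p.1) ≤ (VLf A).card := by
  have := hgl.1.mapsTo (by exact_mod_cast X_colTop_mem hA hgl hp h1)
  simpa using this

lemma X_inj (hp : p ∈ A) (hq : q ∈ A)
    (h : gl (colTop A p.1) = gl (colTop A q.1)) : p.1 = q.1 := by
  rcases Nat.eq_zero_or_pos p.1 with h1 | h1 <;> rcases Nat.eq_zero_or_pos q.1 with h2 | h2
  · omega
  · have := X_zero hA hgl hp h1
    have := X_pos hA hgl hq h2
    omega
  · have := X_zero hA hgl hq h2
    have := X_pos hA hgl hp h1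
    omega
  · by_contra hne
    have htp := X_colTop_mem hA hgl hp h1
    have htq := X_colTop_mem hA hgl hq h2
    have : colTop A p.1 = colTop A q.1 :=
      hgl.1.injOn (by exact_mod_cast htp) (by exact_mod_cast htq) h
    have : (colTop A p.1).1 = (colTop A q.1).1 := by rw [this]
    rw [colTop_fst, colTop_fst] at this
    exact hne this

lemma X_mono (hu : u ∈ A) (hv : v ∈ A) (hrow : u.2 = v.2) (hlt : u.1 < v.1) :
    gl (colTop A u.1) < gl (colTop A v.1) := by
  have hv1 : 1 ≤ v.1 := by omega
  have htv := X_colTop_mem hA hgl hv hv1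
  rcases Nat.eq_zero_or_pos u.1 with h1 | h1
  · have := X_zero hA hgl hu h1
    have := X_pos hA hgl hv hv1
    omega
  · have htu := X_colTop_mem hA hgl hu h1
    have h2 : Ancestor A (colTop A u.1) v :=
      Relation.ReflTransGen.trans (colTop_ancestor hA hu)
        (row_ancestor hA v u hu hv hrow (le_of_lt hlt))
    have h3 : Ancestor A (colTop A v.1) v := colTop_ancestor hA hv
    rcases ancestor_comparable hA v _ _ h2 h3 with h | h
    · have hle : gl (colTop A u.1) ≤ gl (colTop A v.1) :=
        hgl.2.1 _ htu _ htv h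
      rcases eq_or_lt_of_le hle with he | he
      · exfalso
        have := X_inj hA hgl hu hv he
        omega
      · exact he
    · exfalso
      have := (Ancestor.le h).1
      rw [colTop_fst, colTop_fst] at this
      omega

lemma X_lt_iff (hp : p ∈ A) (hq : q ∈ A) (hrow : q.2 = p.2) :
    gl (colTop A q.1) < gl (colTop A p.1) ↔ q.1 < p.1 := by
  constructor
  · intro h
    rcases lt_trichotomy q.1 p.1 with hh | hh | hh
    · exact hh
    · exfalso
      have : colTop A q.1 = colTop A p.1 := by rw [hh]
      rw [this] at h; omega
    · have := X_mono hA hgl hp hq hrow.symm hh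
      omega
  · exact fun h => X_mono hA hgl hq hp hrow h

omit hgl
include hgr

lemma Y_zero (hp : p ∈ A) (h0 : p.2 = 0) : gr (rowMin A p.2) = 0 := by
  rw [h0, rowMin_zero hA]
  exact hgr.2.2 _ root_notMem_VRf

lemma Y_rowMin_mem (hp : p ∈ A) (h1 : 1 ≤ p.2) : rowMin A p.2 ∈ VRf A :=
  rowMin_mem_VRf hA h1 (x := p.1) (y := p.2) (by simpa using hp)

lemma Y_pos (hp : p ∈ A) (h1 : 1 ≤ p.2) :
    1 ≤ gr (rowMin A p.2) ∧ gr (rowMin A p.2) ≤ (VRf A).card := by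
  have := hgr.1.mapsTo (by exact_mod_cast Y_rowMin_mem hA hgr hp h1)
  simpa using this

lemma Y_inj (hp : p ∈ A) (hq : q ∈ A)
    (h : gr (rowMin A p.2) = gr (rowMin A q.2)) : p.2 = q.2 := by
  rcases Nat.eq_zero_or_pos p.2 with h1 | h1 <;> rcases Nat.eq_zero_or_pos q.2 with h2 | h2
  · omega
  · have := Y_zero hA hgr hp h1
    have := Y_pos hA hgr hq h2
    omega
  · have := Y_zero hA hgr hq h2
    have := Y_pos hA hgr hp h1
    omega
  · by_contra hne
    have htp := Y_rowMin_mem hA hgr hp h1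
    have htq := Y_rowMin_mem hA hgr hq h2
    have : rowMin A p.2 = rowMin A q.2 :=
      hgr.1.injOn (by exact_mod_cast htp) (by exact_mod_cast htq) h
    have : (rowMin A p.2).2 = (rowMin A q.2).2 := by rw [this]
    rw [rowMin_snd, rowMin_snd] at this
    exact hne this

lemma Y_mono (hu : u ∈ A) (hv : v ∈ A) (hcol : u.1 = v.1) (hlt : u.2 < v.2) :
    gr (rowMin A u.2) < gr (rowMin A v.2) := by
  have hv1 : 1 ≤ v.2 := by omega
  have htv := Y_rowMin_mem hA hgr hv hv1
  rcases Nat.eq_zero_or_pos u.2 with h1 | h1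
  · have := Y_zero hA hgr hu h1
    have := Y_pos hA hgr hv hv1
    omega
  · have htu := Y_rowMin_mem hA hgr hu h1
    have h2 : Ancestor A (rowMin A u.2) v :=
      Relation.ReflTransGen.trans (rowMin_ancestor hA hu)
        (col_ancestor hA v u hu hv hcol (le_of_lt hlt))
    have h3 : Ancestor A (rowMin A v.2) v := rowMin_ancestor hA hv
    rcases ancestor_comparable hA v _ _ h2 h3 with h | h
    · have hle : gr (rowMin A u.2) ≤ gr (rowMin A v.2) :=
        hgr.2.1 _ htu _ htv h
      rcases eq_or_lt_of_le hle with he | he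
      · exfalso
        have := Y_inj hA hgr hu hv he
        omega
      · exact he
    · exfalso
      have := (Ancestor.le h).2
      rw [rowMin_snd, rowMin_snd] at this
      omega

lemma Y_lt_iff (hp : p ∈ A) (hq : q ∈ A) (hcol : q.1 = p.1) :
    gr (rowMin A q.2) < gr (rowMin A p.2) ↔ q.2 < p.2 := by
  constructor
  · intro h
    rcases lt_trichotomy q.2 p.2 with hh | hh | hh
    · exact hh
    · exfalso
      have : rowMin A q.2 = rowMin A p.2 := by rw [hh]
      rw [this] at h; omega
    · have := Y_mono hA hgr hp hq hcol.symm hh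
      omega
  · exact fun h => Y_mono hA hgr hq hp hcol h

include hgl

lemma natMap_root : natMap A gl gr (0, 0) = (0, 0) := by
  unfold natMap
  have h1 := X_zero hA hgl hA.1 rfl
  have h2 := Y_zero hA hgr hA.1 rfl
  simp only at h1 h2
  rw [h1, h2]

lemma natMap_injOn : ∀ p ∈ A, ∀ q ∈ A, natMap A gl gr p = natMap A gl gr q → p = q := by
  intro p hp q hq h
  unfold natMap at h
  have h1 : gl (colTop A p.1) = gl (colTop A q.1) := congrArg Prod.fst h
  have h2 : gr (rowMin A p.2) = gr (rowMin A q.2) := congrArg Prod.snd h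
  exact Prod.ext (X_inj hA hgl hp hq h1) (Y_inj hA hgr hp hq h2)

end NatMap


/-! ### The image of a labeling pair is a NAT isomorphic to `A` -/

section Forward

variable {A : Finset (ℕ × ℕ)} {p q u v : ℕ × ℕ} {gl gr : ℕ × ℕ → ℕ}
variable (hA : IsNAT A)
variable (hgl : gl ∈ Labelings (VLf A) (Ancestor A) (VLf A).card)
variable (hgr : gr ∈ Labelings (VRf A) (Ancestor A) (VRf A).card)

include hA hgl hgr

lemma natMap_parent_iff :
    ∀ p ∈ A, ∀ q ∈ A,
      (LeftParent A p q ↔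
        LeftParent (A.image (natMap A gl gr)) (natMap A gl gr p) (natMap A gl gr q)) ∧
      (RightParent A p q ↔
        RightParent (A.image (natMap A gl gr)) (natMap A gl gr p) (natMap A gl gr q)) := by
  intro p hp q hq
  set f := natMap A gl gr with hf
  have hf1 : ∀ r, (f r).1 = gl (colTop A r.1) := fun r => rfl
  have hf2 : ∀ r, (f r).2 = gr (rowMin A r.2) := fun r => rfl
  constructor
  · constructor
    · rintro ⟨hp', hq', h2, h1, hmax⟩
      refine ⟨Finset.mem_image_of_mem f hp, Finset.mem_image_of_mem f hq, ?_, ?_, ?_⟩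
      · rw [hf2, hf2, h2]
      · rw [hf1, hf1]
        exact (X_lt_iff hA hgl hp hq h2).mpr h1
      · intro r' hr' hr2 hr1
        obtain ⟨r, hr, rfl⟩ := Finset.mem_image.mp hr'
        rw [hf2, hf2] at hr2
        have hrp2 : r.2 = p.2 := Y_inj hA hgr hr hp hr2
        rw [hf1, hf1] at hr1 ⊢
        have hrp1 : r.1 < p.1 := (X_lt_iff hA hgl hp hr hrp2).mp hr1
        have hrq : r.1 ≤ q.1 := hmax r hr hrp2 hrp1
        rcases eq_or_lt_of_le hrq with he | he
        · rw [he]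
        · exact le_of_lt (X_mono hA hgl hr hq (by omega) he)
    · rintro ⟨-, -, h2, h1, hmax⟩
      rw [hf2, hf2] at h2
      rw [hf1, hf1] at h1
      have hq2 : q.2 = p.2 := Y_inj hA hgr hq hp h2
      have hq1 : q.1 < p.1 := (X_lt_iff hA hgl hp hq hq2).mp h1
      refine ⟨hp, hq, hq2, hq1, ?_⟩
      intro r hr hr2 hr1
      have h3 : (f r).2 = (f p).2 := by rw [hf2, hf2, hr2]
      have h4 : (f r).1 < (f p).1 := by
        rw [hf1, hf1]; exact (X_lt_iff hA hgl hp hr hr2).mpr hr1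
      have h5 : (f r).1 ≤ (f q).1 := hmax (f r) (Finset.mem_image_of_mem f hr) h3 h4
      by_contra hc
      push_neg at hc
      have := X_mono hA hgl hq hr (by omega) hc
      rw [hf1, hf1] at h5
      omega
  · constructor
    · rintro ⟨hp', hq', h1, h2, hmax⟩
      refine ⟨Finset.mem_image_of_mem f hp, Finset.mem_image_of_mem f hq, ?_, ?_, ?_⟩
      · rw [hf1, hf1, h1]
      · rw [hf2, hf2]
        exact (Y_lt_iff hA hgr hp hq h1).mpr h2
      · intro r' hr' hr1 hr2
        obtain ⟨r, hr, rfl⟩ := Finset.mem_image.mp hr'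
        rw [hf1, hf1] at hr1
        have hrp1 : r.1 = p.1 := X_inj hA hgl hr hp hr1
        rw [hf2, hf2] at hr2 ⊢
        have hrp2 : r.2 < p.2 := (Y_lt_iff hA hgr hp hr hrp1).mp hr2
        have hrq : r.2 ≤ q.2 := hmax r hr hrp1 hrp2
        rcases eq_or_lt_of_le hrq with he | he
        · rw [he]
        · exact le_of_lt (Y_mono hA hgr hr hq (by omega) he)
    · rintro ⟨-, -, h1, h2, hmax⟩
      rw [hf1, hf1] at h1
      rw [hf2, hf2] at h2
      have hq1 : q.1 = p.1 := X_inj hA hgl hq hp h1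
      have hq2 : q.2 < p.2 := (Y_lt_iff hA hgr hp hq hq1).mp h2
      refine ⟨hp, hq, hq1, hq2, ?_⟩
      intro r hr hr1 hr2
      have h3 : (f r).1 = (f p).1 := by rw [hf1, hf1, hr1]
      have h4 : (f r).2 < (f p).2 := by
        rw [hf2, hf2]; exact (Y_lt_iff hA hgr hp hr hr1).mpr hr2
      have h5 : (f r).2 ≤ (f q).2 := hmax (f r) (Finset.mem_image_of_mem f hr) h3 h4
      by_contra hc
      push_neg at hc
      have := Y_mono hA hgr hq hr (by omega) hc
      rw [hf2, hf2] at h5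
      omega

lemma natMap_isNAT : IsNAT (A.image (natMap A gl gr)) := by
  set f := natMap A gl gr with hf
  set B := A.image f with hB
  have hf1 : ∀ r, (f r).1 = gl (colTop A r.1) := fun r => rfl
  have hf2 : ∀ r, (f r).2 = gr (rowMin A r.2) := fun r => rfl
  have hroot : f (0,0) = (0,0) := natMap_root hA hgl hgr
  refine ⟨?_, ?_, ?_⟩
  · rw [hB, ← hroot]
    exact Finset.mem_image_of_mem f hA.1
  · intro b hb hbne
    obtain ⟨p, hp, rfl⟩ := Finset.mem_image.mp hb
    have hpne : p ≠ (0,0) := by rintro rfl; exact hbne hroot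
    have wR : (∃ q' ∈ B, q'.1 = (f p).1 ∧ q'.2 < (f p).2) ↔
        (∃ q ∈ A, q.1 = p.1 ∧ q.2 < p.2) := by
      constructor
      · rintro ⟨q', hq', h1, h2⟩
        obtain ⟨q, hq, rfl⟩ := Finset.mem_image.mp hq'
        rw [hf1, hf1] at h1
        have hq1 : q.1 = p.1 := X_inj hA hgl hq hp h1
        rw [hf2, hf2] at h2
        exact ⟨q, hq, hq1, (Y_lt_iff hA hgr hp hq hq1).mp h2⟩
      · rintro ⟨q, hq, h1, h2⟩
        refine ⟨f q, Finset.mem_image_of_mem f hq, ?_, ?_⟩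
        · rw [hf1, hf1, h1]
        · rw [hf2, hf2]
          exact (Y_lt_iff hA hgr hp hq h1).mpr h2
    have wL : (∃ r' ∈ B, r'.2 = (f p).2 ∧ r'.1 < (f p).1) ↔
        (∃ r ∈ A, r.2 = p.2 ∧ r.1 < p.1) := by
      constructor
      · rintro ⟨r', hr', h2, h1⟩
        obtain ⟨r, hr, rfl⟩ := Finset.mem_image.mp hr'
        rw [hf2, hf2] at h2
        have hr2 : r.2 = p.2 := Y_inj hA hgr hr hp h2
        rw [hf1, hf1] at h1
        exact ⟨r, hr, hr2, (X_lt_iff hA hgl hp hr hr2).mp h1⟩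
      · rintro ⟨r, hr, h2, h1⟩
        refine ⟨f r, Finset.mem_image_of_mem f hr, ?_, ?_⟩
        · rw [hf2, hf2, h2]
        · rw [hf1, hf1]
          exact (X_lt_iff hA hgl hp hr h2).mpr h1
    rcases hA.2.1 p hp hpne with ⟨h, hn⟩ | ⟨h, hn⟩
    · exact Or.inl ⟨wR.mpr h, fun hh => hn (wL.mp hh)⟩
    · exact Or.inr ⟨wL.mpr h, fun hh => hn (wR.mp hh)⟩
  · intro b hb
    obtain ⟨p, hp, rfl⟩ := Finset.mem_image.mp hb
    constructor
    · intro x' hx'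
      rw [hf1] at hx'
      rcases Nat.eq_zero_or_pos x' with rfl | hx1
      · exact ⟨(0,0), by rw [hB, ← hroot]; exact Finset.mem_image_of_mem f hA.1, rfl⟩
      · have hp1 : 1 ≤ p.1 := by
          by_contra hc
          have : p.1 = 0 := by omega
          rw [X_zero hA hgl hp this] at hx'
          omega
        have hW := X_pos hA hgl hp hp1
        have hx'W : x' ∈ (↑(Finset.Icc 1 ((VLf A).card)) : Set ℕ) := by
          simp only [Finset.coe_Icc, Set.mem_Icc]
          omega
        obtain ⟨w, hw, hwx⟩ := hgl.1.surjOn hx'W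
        simp only [Finset.mem_coe] at hw
        refine ⟨f w, Finset.mem_image_of_mem f (mem_VLf_iff.mp hw).1, ?_⟩
        rw [hf1, VLf_colTop hA hw, hwx]
    · intro y' hy'
      rw [hf2] at hy'
      rcases Nat.eq_zero_or_pos y' with rfl | hy1
      · exact ⟨(0,0), by rw [hB, ← hroot]; exact Finset.mem_image_of_mem f hA.1, rfl⟩
      · have hp2 : 1 ≤ p.2 := by
          by_contra hc
          have : p.2 = 0 := by omega
          rw [Y_zero hA hgr hp this] at hy'
          omega
        have hH := Y_pos hA hgr hp hp2
        have hy'H : y' ∈ (↑(Finset.Icc 1 ((VRf A).card)) : Set ℕ) := by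
          simp only [Finset.coe_Icc, Set.mem_Icc]
          omega
        obtain ⟨w, hw, hwy⟩ := hgr.1.surjOn hy'H
        simp only [Finset.mem_coe] at hw
        refine ⟨f w, Finset.mem_image_of_mem f (mem_VRf_iff.mp hw).1, ?_⟩
        rw [hf2, VRf_rowMin hA hw, hwy]

lemma natMap_NATIso : NATIso A (A.image (natMap A gl gr)) := by
  refine ⟨natMap A gl gr, ⟨?_, ?_, ?_⟩, natMap_root hA hgl hgr, natMap_parent_iff hA hgl hgr⟩
  · intro x hx
    simp only [Finset.mem_coe, Finset.coe_image] at hx ⊢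
    exact Set.mem_image_of_mem _ hx
  · intro x hx y hy hxy
    exact natMap_injOn hA hgl hgr x (by exact_mod_cast hx) y (by exact_mod_cast hy) hxy
  · intro b hb
    simp only [Finset.coe_image] at hb
    exact hb

end Forward


/-! ### Surjectivity and injectivity of the labeling correspondence -/

section Backward

variable {A A' : Finset (ℕ × ℕ)} {p q u v : ℕ × ℕ} {gl gr gl' gr' : ℕ × ℕ → ℕ}

lemma natMap_fst_VLf (hA : IsNAT A) (hv : v ∈ VLf A) :
    (natMap A gl gr v).1 = gl v := by
  show gl (colTop A v.1) = gl v
  rw [VLf_colTop hA hv]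

lemma natMap_snd_VRf (hA : IsNAT A) (hv : v ∈ VRf A) :
    (natMap A gl gr v).2 = gr v := by
  show gr (rowMin A v.2) = gr v
  rw [VRf_rowMin hA hv]

/-- Injectivity: two labeling pairs inducing the same NAT are equal. -/
lemma natMap_inj_labelings (hA : IsNAT A)
    (hgl : gl ∈ Labelings (VLf A) (Ancestor A) (VLf A).card)
    (hgr : gr ∈ Labelings (VRf A) (Ancestor A) (VRf A).card)
    (hgl' : gl' ∈ Labelings (VLf A) (Ancestor A) (VLf A).card)
    (hgr' : gr' ∈ Labelings (VRf A) (Ancestor A) (VRf A).card)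
    (h : A.image (natMap A gl gr) = A.image (natMap A gl' gr')) :
    gl = gl' ∧ gr = gr' := by
  have hpar := natMap_parent_iff hA hgl hgr
  have hpar' := natMap_parent_iff hA hgl' hgr'
  rw [← h] at hpar'
  have hags : ∀ p ∈ A, natMap A gl gr p = natMap A gl' gr' p :=
    iso_unique (natMap_root hA hgl hgr) hpar hA (natMap_root hA hgl' hgr') hpar'
  constructor
  · funext w
    by_cases hw : w ∈ VLf A
    · have h1 := hags w (mem_VLf_iff.mp hw).1
      have h2 : (natMap A gl gr w).1 = (natMap A gl' gr' w).1 := by rw [h1]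
      rwa [natMap_fst_VLf hA hw, natMap_fst_VLf hA hw] at h2
    · rw [hgl.2.2 w hw, hgl'.2.2 w hw]
  · funext w
    by_cases hw : w ∈ VRf A
    · have h1 := hags w (mem_VRf_iff.mp hw).1
      have h2 : (natMap A gl gr w).2 = (natMap A gl' gr' w).2 := by rw [h1]
      rwa [natMap_snd_VRf hA hw, natMap_snd_VRf hA hw] at h2
    · rw [hgr.2.2 w hw, hgr'.2.2 w hw]

/-- Surjectivity: every NAT isomorphic to `A` comes from a labeling pair. -/
lemma natMap_surj (hA : IsNAT A) (hA' : IsNAT A') (hiso : NATIso A A') :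
    ∃ gl gr, gl ∈ Labelings (VLf A) (Ancestor A) (VLf A).card ∧
      gr ∈ Labelings (VRf A) (Ancestor A) (VRf A).card ∧
      A.image (natMap A gl gr) = A' := by
  classical
  obtain ⟨φ, hbij, hroot, hpar⟩ := hiso
  set gl : ℕ × ℕ → ℕ := fun v => if v ∈ VLf A then (φ v).1 else 0 with hgl_def
  set gr : ℕ × ℕ → ℕ := fun v => if v ∈ VRf A then (φ v).2 else 0 with hgr_def
  -- φ restricts to a bijection between left children
  have hVL : Set.BijOn φ ↑(VLf A) ↑(VLf A') := by
    refine ⟨?_, ?_, ?_⟩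
    · intro w hw
      simp only [Finset.mem_coe] at hw ⊢
      exact iso_mem_VLf hpar hA hA' hw
    · intro a ha b hb hab
      simp only [Finset.mem_coe] at ha hb
      exact hbij.injOn (by simpa using (mem_VLf_iff.mp ha).1)
        (by simpa using (mem_VLf_iff.mp hb).1) hab
    · intro w hw
      simp only [Finset.mem_coe] at hw
      obtain ⟨v, hv, rfl⟩ := hbij.surjOn (by simpa using (mem_VLf_iff.mp hw).1)
      simp only [Finset.mem_coe] at hv
      refine ⟨v, ?_, rfl⟩
      simp only [Finset.mem_coe]
      obtain ⟨q', hq'⟩ := (mem_VLf_iff_leftParent hA').mp hw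
      obtain ⟨qv, hqv, rfl⟩ := hbij.surjOn (by simpa using hq'.2.1)
      simp only [Finset.mem_coe] at hqv
      exact (mem_VLf_iff_leftParent hA).mpr ⟨qv, (hpar v hv qv hqv).1.mpr hq'⟩
  have hVR : Set.BijOn φ ↑(VRf A) ↑(VRf A') := by
    refine ⟨?_, ?_, ?_⟩
    · intro w hw
      simp only [Finset.mem_coe] at hw ⊢
      exact iso_mem_VRf hpar hA hA' hw
    · intro a ha b hb hab
      simp only [Finset.mem_coe] at ha hb
      exact hbij.injOn (by simpa using (mem_VRf_iff.mp ha).1)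
        (by simpa using (mem_VRf_iff.mp hb).1) hab
    · intro w hw
      simp only [Finset.mem_coe] at hw
      obtain ⟨v, hv, rfl⟩ := hbij.surjOn (by simpa using (mem_VRf_iff.mp hw).1)
      simp only [Finset.mem_coe] at hv
      refine ⟨v, ?_, rfl⟩
      simp only [Finset.mem_coe]
      obtain ⟨q', hq'⟩ := (mem_VRf_iff_rightParent hA').mp hw
      obtain ⟨qv, hqv, rfl⟩ := hbij.surjOn (by simpa using hq'.2.1)
      simp only [Finset.mem_coe] at hqv
      exact (mem_VRf_iff_rightParent hA).mpr ⟨qv, (hpar v hv qv hqv).2.mpr hq'⟩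
  have hWW : (VLf A').card = (VLf A).card := by
    rw [← Set.ncard_coe_finset, ← Set.ncard_coe_finset, ← hVL.image_eq,
      Set.ncard_image_of_injOn hVL.injOn]
  have hHH : (VRf A').card = (VRf A).card := by
    rw [← Set.ncard_coe_finset, ← Set.ncard_coe_finset, ← hVR.image_eq,
      Set.ncard_image_of_injOn hVR.injOn]
  have hglmem : gl ∈ Labelings (VLf A) (Ancestor A) (VLf A).card := by
    refine ⟨?_, ?_, ?_⟩
    · have himg : (VLf A').image Prod.fst = Finset.Icc 1 ((VLf A).card) := by
        rw [VLf_image_fst hA', hWW]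
      have h1 : Set.BijOn Prod.fst (↑(VLf A') : Set (ℕ × ℕ)) (↑((VLf A').image Prod.fst) : Set ℕ) := by
        rw [Finset.coe_image]
        exact ⟨Set.mapsTo_image _ _, fst_injOn_VLf hA', Set.surjOn_image _ _⟩
      rw [himg] at h1
      have h2 := h1.comp hVL
      apply h2.congr
      intro w hw
      simp only [Finset.mem_coe] at hw
      simp [hgl_def, hw]
    · intro a ha b hb hab
      have h1 : Ancestor A' (φ a) (φ b) :=
        iso_ancestor hpar hab (mem_VLf_iff.mp ha).1
      have := (Ancestor.le h1).1
      simp only [hgl_def, if_pos ha, if_pos hb]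
      exact this
    · intro w hw
      simp [hgl_def, hw]
  have hgrmem : gr ∈ Labelings (VRf A) (Ancestor A) (VRf A).card := by
    refine ⟨?_, ?_, ?_⟩
    · have himg : (VRf A').image Prod.snd = Finset.Icc 1 ((VRf A).card) := by
        rw [VRf_image_snd hA', hHH]
      have h1 : Set.BijOn Prod.snd (↑(VRf A') : Set (ℕ × ℕ)) (↑((VRf A').image Prod.snd) : Set ℕ) := by
        rw [Finset.coe_image]
        exact ⟨Set.mapsTo_image _ _, snd_injOn_VRf hA', Set.surjOn_image _ _⟩
      rw [himg] at h1
      have h2 := h1.comp hVR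
      apply h2.congr
      intro w hw
      simp only [Finset.mem_coe] at hw
      simp [hgr_def, hw]
    · intro a ha b hb hab
      have h1 : Ancestor A' (φ a) (φ b) :=
        iso_ancestor hpar hab (mem_VRf_iff.mp ha).1
      have := (Ancestor.le h1).2
      simp only [hgr_def, if_pos ha, if_pos hb]
      exact this
    · intro w hw
      simp [hgr_def, hw]
  refine ⟨gl, gr, hglmem, hgrmem, ?_⟩
  have hptwise : ∀ p ∈ A, natMap A gl gr p = φ p := by
    intro p hp
    have hfst : (natMap A gl gr p).1 = (φ p).1 := by
      show gl (colTop A p.1) = (φ p).1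
      rcases Nat.eq_zero_or_pos p.1 with h0 | h1
      · rw [h0, colTop_zero hA]
        have h2 : (φ ((0,0) : ℕ × ℕ)).1 = (φ p).1 :=
          iso_fst_eq hpar hA p (0,0) hA.1 hp (by omega) (by omega)
        rw [hgl_def]
        simp only [if_neg root_notMem_VLf]
        rw [← h2, hroot]
      · have ht : colTop A p.1 ∈ VLf A :=
          colTop_mem_VLf hA h1 (x := p.1) (y := p.2) (by simpa using hp)
        have h2 : (φ (colTop A p.1)).1 = (φ p).1 :=
          iso_fst_eq hpar hA p (colTop A p.1) (colTop_mem' hp) hp rfl (colTop_le' hp)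
        rw [hgl_def]
        simp only [if_pos ht]
        exact h2
    have hsnd : (natMap A gl gr p).2 = (φ p).2 := by
      show gr (rowMin A p.2) = (φ p).2
      rcases Nat.eq_zero_or_pos p.2 with h0 | h1
      · rw [h0, rowMin_zero hA]
        have h2 : (φ ((0,0) : ℕ × ℕ)).2 = (φ p).2 :=
          iso_snd_eq hpar hA p (0,0) hA.1 hp (by omega) (by omega)
        rw [hgr_def]
        simp only [if_neg root_notMem_VRf]
        rw [← h2, hroot]
      · have ht : rowMin A p.2 ∈ VRf A :=
          rowMin_mem_VRf hA h1 (x := p.1) (y := p.2) (by simpa using hp)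
        have h2 : (φ (rowMin A p.2)).2 = (φ p).2 :=
          iso_snd_eq hpar hA p (rowMin A p.2) (rowMin_mem' hp) hp rfl (rowMin_le' hp)
        rw [hgr_def]
        simp only [if_pos ht]
        exact h2
    exact Prod.ext hfst hsnd
  apply Finset.coe_injective
  rw [Finset.coe_image]
  have himg : natMap A gl gr '' ↑A = φ '' ↑A :=
    Set.image_congr (fun a ha => hptwise a (by simpa using ha))
  rw [himg, hbij.image_eq]

end Backward

theorem hook_formula_for_nats (A : Finset (ℕ × ℕ)) (hA : IsNAT A) :
    NATcount A * (∏ v ∈ VLf A, hookL A v) * (∏ v ∈ VRf A, hookR A v) =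
      (VLf A).card.factorial * (VRf A).card.factorial := by
  classical
  set LL := Labelings (VLf A) (Ancestor A) ((VLf A).card) with hLL
  set LR := Labelings (VRf A) (Ancestor A) ((VRf A).card) with hLR
  -- the bijection between labeling pairs and isomorphic NATs
  have hbij : Set.BijOn
      (fun gg : (ℕ × ℕ → ℕ) × (ℕ × ℕ → ℕ) => A.image (natMap A gg.1 gg.2))
      (LL ×ˢ LR) {A' : Finset (ℕ × ℕ) | IsNAT A' ∧ NATIso A A'} := by
    refine ⟨?_, ?_, ?_⟩
    · rintro ⟨gl, gr⟩ ⟨hgl, hgr⟩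
      exact ⟨natMap_isNAT hA hgl hgr, natMap_NATIso hA hgl hgr⟩
    · rintro ⟨gl, gr⟩ ⟨hgl, hgr⟩ ⟨gl', gr'⟩ ⟨hgl', hgr'⟩ h
      obtain ⟨h1, h2⟩ := natMap_inj_labelings hA hgl hgr hgl' hgr' h
      exact Prod.ext h1 h2
    · rintro A' ⟨hA', hiso⟩
      obtain ⟨gl, gr, hgl, hgr, heq⟩ := natMap_surj hA hA' hiso
      exact ⟨(gl, gr), ⟨hgl, hgr⟩, heq⟩
  have hfinLL : LL.Finite := labelings_finite _ _ _
  have hfinLR : LR.Finite := labelings_finite _ _ _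
  have hprod : (LL ×ˢ LR).ncard = LL.ncard * LR.ncard := by
    rw [Set.ncard_eq_toFinset_card _ (hfinLL.prod hfinLR),
      Set.ncard_eq_toFinset_card _ hfinLL, Set.ncard_eq_toFinset_card _ hfinLR,
      ← Finset.card_product]
    congr 1
    apply Finset.ext
    intro gg
    simp [Set.Finite.mem_toFinset, Finset.mem_product, Set.mem_prod]
  have hcount : NATcount A = LL.ncard * LR.ncard := by
    rw [NATcount, ← hbij.image_eq, Set.ncard_image_of_injOn hbij.injOn, hprod]
  -- hook lengths as filter cards
  have hLhook : ∀ v ∈ VLf A, hookL A v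
      = ((VLf A).filter (fun u => Ancestor A v u)).card := by
    intro v _
    rw [hookL, ← Set.ncard_coe_finset]
    congr 1
    ext u
    simp [Finset.mem_filter, Finset.mem_coe]
  have hRhook : ∀ v ∈ VRf A, hookR A v
      = ((VRf A).filter (fun u => Ancestor A v u)).card := by
    intro v _
    rw [hookR, ← Set.ncard_coe_finset]
    congr 1
    ext u
    simp [Finset.mem_filter, Finset.mem_coe]
  have hL := hook_abstract ((VLf A).card) (VLf A) (Ancestor A) (fun p => p.1 + p.2)
    (fun u _ => Relation.ReflTransGen.refl)
    (fun u v w h h' => Relation.ReflTransGen.trans h h')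
    (fun u v h hne => Ancestor.add_lt h hne)
    (fun w _ u _ v _ h h' => ancestor_comparable hA w u v h h')
    rfl
  have hR := hook_abstract ((VRf A).card) (VRf A) (Ancestor A) (fun p => p.1 + p.2)
    (fun u _ => Relation.ReflTransGen.refl)
    (fun u v w h h' => Relation.ReflTransGen.trans h h')
    (fun u v h hne => Ancestor.add_lt h hne)
    (fun w _ u _ v _ h h' => ancestor_comparable hA w u v h h')
    rfl
  rw [Finset.prod_congr rfl hLhook, Finset.prod_congr rfl hRhook, hcount]
  rw [← hL, ← hR]
  ring
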